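/- Let I be a set, r : I → ℝ an injective map, Z the swapping ring of (I, r), and {·,·} a swapping bracket on Z. Then {·,·} satisfies the Jacobi identity: {{P,Q},R} + {{Q,R},P} + {{R,P},Q} = 0 for all P, Q, R ∈ Z. -/

import Mathlib

noncomputable section

/-- The linking number `J(r,x,s,y)` of two pairs of points on the (cut) circle. -/
def linkJ (r x s y : ℝ) : ℝ :=
  (1 / 2) * (Real.sign (r - x) * Real.sign (r - y) * Real.sign (y - x)
    - Real.sign (r - x) * Real.sign (r - s) * Real.sign (s - x))

/-- The ideal of `ℝ[x_{ab} : (a,b) ∈ I × I]` generated by the variables `x_{aa}`. -/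
def swapIdeal (I : Type*) : Ideal (MvPolynomial (I × I) ℝ) :=
  Ideal.span {P : MvPolynomial (I × I) ℝ | ∃ a : I, P = MvPolynomial.X (a, a)}

/-- The swapping ring of `(I, r)`: the quotient of the polynomial ring
`ℝ[x_{ab} : (a,b) ∈ I × I]` by the ideal generated by the `x_{aa}`. -/
abbrev SwapRing (I : Type*) : Type _ := MvPolynomial (I × I) ℝ ⧸ swapIdeal I

/-- The generator `x_{ab}` of the swapping ring. -/
def swapGen {I : Type*} (a b : I) : SwapRing I :=
  Ideal.Quotient.mk (swapIdeal I) (MvPolynomial.X (a, b))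

/- ## Discrete combinatorics -/

def zsg (p q : Fin 6) : ℤ := if p < q then -1 else if q < p then 1 else 0

def zJ (p q s t : Fin 6) : ℤ :=
  zsg p q * zsg p t * zsg t q - zsg p q * zsg p s * zsg s q

def zC1 (a b c d e f : Fin 6) : ℤ :=
  zJ a b c d * zJ c b e f + zJ c d e f * zJ e d a b + zJ e f a b * zJ a f c d

def zC2 (a b c d e f : Fin 6) : ℤ :=
  zJ a b c d * zJ a d e f + zJ c d e f * zJ c f a b + zJ e f a b * zJ e b c d

set_option maxRecDepth 100000 in
set_option maxHeartbeats 4000000 in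
theorem discreteJac : ∀ a b c d e f : Fin 6,
    (zC1 a b c d e f = 0 ∧ zC2 a b c d e f = 0) ∨
    ((a = d ∨ c = f ∨ e = b) ∧ (c = b ∨ a = f ∨ e = d)) ∨
    (zC1 a b c d e f + zC2 a b c d e f = 0 ∧
      ((a = c ∧ b = d) ∨ (c = e ∧ d = f) ∨ (e = a ∧ f = b) ∨
        (a = c ∧ c = e) ∨ (b = d ∧ d = f))) := by decide

/- ## Rank machinery -/

open Classical in
def rnk (v : Fin 6 → ℝ) (i : Fin 6) : Fin 6 :=
  ⟨(Finset.univ.filter (fun j => v j < v i)).card, by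
    have h1 : (Finset.univ.filter (fun j => v j < v i)) ⊆ Finset.univ.erase i := by
      intro j hj
      simp only [Finset.mem_filter, Finset.mem_univ, true_and] at hj
      exact Finset.mem_erase.mpr
        ⟨fun h => absurd hj (by rw [h]; exact lt_irrefl _), Finset.mem_univ j⟩
    calc (Finset.univ.filter (fun j => v j < v i)).card
        ≤ (Finset.univ.erase i).card := Finset.card_le_card h1
      _ < Finset.univ.card := Finset.card_erase_lt_of_mem (Finset.mem_univ i)
      _ = 6 := by simp⟩

lemma rnk_lt {v : Fin 6 → ℝ} {i j : Fin 6} (h : v i < v j) : rnk v i < rnk v j := by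
  classical
  show (Finset.univ.filter fun k => v k < v i).card < (Finset.univ.filter fun k => v k < v j).card
  apply Finset.card_lt_card
  constructor
  · intro k hk
    simp only [Finset.mem_filter, Finset.mem_univ, true_and] at *
    exact hk.trans h
  · intro hsub
    have hi : i ∈ Finset.univ.filter (fun k => v k < v j) := by
      simp only [Finset.mem_filter, Finset.mem_univ, true_and]; exact h
    have := hsub hi
    simp only [Finset.mem_filter, Finset.mem_univ, true_and] at this
    exact lt_irrefl _ this

lemma rnk_eq {v : Fin 6 → ℝ} {i j : Fin 6} (h : v i = v j) : rnk v i = rnk v j := by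
  classical
  apply Fin.ext
  show (Finset.univ.filter fun k => v k < v i).card = (Finset.univ.filter fun k => v k < v j).card
  congr 1
  ext k
  simp [h]

lemma val_eq_of_rnk_eq {v : Fin 6 → ℝ} {i j : Fin 6} (h : rnk v i = rnk v j) : v i = v j := by
  rcases lt_trichotomy (v i) (v j) with hl | he | hl
  · exact absurd h (ne_of_lt (rnk_lt hl))
  · exact he
  · exact absurd h.symm (ne_of_lt (rnk_lt hl))

lemma sign_eq_zsg (v : Fin 6 → ℝ) (i j : Fin 6) :
    Real.sign (v i - v j) = ((zsg (rnk v i) (rnk v j) : ℤ) : ℝ) := by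
  rcases lt_trichotomy (v i) (v j) with h | h | h
  · rw [Real.sign_of_neg (by linarith), zsg, if_pos (rnk_lt h)]; norm_num
  · have hr := rnk_eq h
    rw [h, sub_self, Real.sign_zero, zsg, if_neg (by rw [hr]; exact lt_irrefl _),
      if_neg (by rw [hr]; exact lt_irrefl _)]
    norm_num
  · have hlt := rnk_lt h
    rw [Real.sign_of_pos (by linarith), zsg, if_neg (not_lt_of_gt hlt), if_pos hlt]
    norm_num

lemma linkJ_rank (v : Fin 6 → ℝ) (i j k l : Fin 6) :
    linkJ (v i) (v j) (v k) (v l)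
      = (1 / 2) * ((zJ (rnk v i) (rnk v j) (rnk v k) (rnk v l) : ℤ) : ℝ) := by
  rw [linkJ, zJ, sign_eq_zsg v i j, sign_eq_zsg v i l, sign_eq_zsg v l j,
    sign_eq_zsg v i k, sign_eq_zsg v k j]
  push_cast
  ring

lemma swapGen_diag {I : Type*} (a : I) : swapGen (I := I) a a = 0 :=
  Ideal.Quotient.eq_zero_iff_mem.mpr (Ideal.subset_span ⟨a, rfl⟩)

lemma swapGen_adjoin_top (I : Type*) :
    Algebra.adjoin ℝ (Set.range fun p : I × I => swapGen p.1 p.2) = ⊤ := by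
  have h1 : Function.Surjective (Ideal.Quotient.mkₐ ℝ (swapIdeal I)) :=
    Ideal.Quotient.mkₐ_surjective ℝ _
  have h2 := AlgHom.map_adjoin (Ideal.Quotient.mkₐ ℝ (swapIdeal I))
      (Set.range (MvPolynomial.X : I × I → MvPolynomial (I × I) ℝ))
  rw [MvPolynomial.adjoin_range_X, Algebra.map_top,
    (AlgHom.range_eq_top _).mpr h1] at h2
  rw [h2]
  congr 1
  rw [← Set.range_comp]
  rfl

/- ## Bracket lemmas -/

section Bracket

variable {I : Type*} (br : SwapRing I → SwapRing I → SwapRing I)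

def Jacobiator (P Q R : SwapRing I) : SwapRing I :=
  br (br P Q) R + br (br Q R) P + br (br R P) Q

variable
  (h_add : ∀ x y z : SwapRing I, br (x + y) z = br x z + br y z)
  (h_smul : ∀ (c : ℝ) (x y : SwapRing I), br (c • x) y = c • br x y)
  (h_anti : ∀ x y : SwapRing I, br x y = - br y x)
  (h_leib : ∀ x y z : SwapRing I, br (x * y) z = x * br y z + y * br x z)

include h_add in
lemma br_zero_left (x : SwapRing I) : br 0 x = 0 := by
  have h := h_add 0 0 x
  rw [add_zero] at h
  exact (left_eq_add.mp h)

include h_add h_anti in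
lemma br_add_right (x y z : SwapRing I) : br z (x + y) = br z x + br z y := by
  rw [h_anti z (x + y), h_add x y z, h_anti x z, h_anti y z]
  abel

include h_smul h_anti in
lemma br_smul_right (c : ℝ) (x y : SwapRing I) : br x (c • y) = c • br x y := by
  rw [h_anti x (c • y), h_smul c y x, h_anti y x]
  simp

include h_leib h_anti in
lemma br_mul_right (x y z : SwapRing I) : br z (x * y) = x * br z y + y * br z x := by
  rw [h_anti z (x * y), h_leib x y z, h_anti y z, h_anti x z]
  ring

include h_leib in
lemma br_one_left (x : SwapRing I) : br 1 x = 0 := by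
  have h := h_leib 1 1 x
  simp only [one_mul] at h
  exact left_eq_add.mp h

include h_smul h_leib in
lemma br_algebraMap_left (c : ℝ) (x : SwapRing I) :
    br (algebraMap ℝ (SwapRing I) c) x = 0 := by
  rw [Algebra.algebraMap_eq_smul_one, h_smul, br_one_left br h_leib, smul_zero]

lemma jac_cyclic (P Q R : SwapRing I) : Jacobiator br P Q R = Jacobiator br Q R P := by
  unfold Jacobiator; abel

include h_add h_anti in
lemma jac_add_left (P P' Q R : SwapRing I) :
    Jacobiator br (P + P') Q R = Jacobiator br P Q R + Jacobiator br P' Q R := by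
  unfold Jacobiator
  rw [h_add P P' Q, h_add (br P Q) (br P' Q) R,
    br_add_right br h_add h_anti P P' (br Q R),
    br_add_right br h_add h_anti P P' R, h_add (br R P) (br R P') Q]
  abel

include h_add h_anti h_leib in
lemma jac_mul_left (P P' Q R : SwapRing I) :
    Jacobiator br (P * P') Q R = P * Jacobiator br P' Q R + P' * Jacobiator br P Q R := by
  unfold Jacobiator
  rw [h_leib P P' Q, h_add (P * br P' Q) (P' * br P Q) R,
    h_leib P (br P' Q) R, h_leib P' (br P Q) R,
    br_mul_right br h_anti h_leib P P' (br Q R),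
    br_mul_right br h_anti h_leib P P' R,
    h_add (P * br R P') (P' * br R P) Q,
    h_leib P (br R P') Q, h_leib P' (br R P) Q]
  linear_combination (br P Q) * (h_anti R P') + (br P' Q) * (h_anti R P)

include h_add h_smul h_anti h_leib in
lemma jac_algebraMap_left (c : ℝ) (Q R : SwapRing I) :
    Jacobiator br (algebraMap ℝ (SwapRing I) c) Q R = 0 := by
  unfold Jacobiator
  rw [br_algebraMap_left br h_smul h_leib c Q, br_zero_left br h_add R,
    h_anti (br Q R) (algebraMap ℝ (SwapRing I) c),
    br_algebraMap_left br h_smul h_leib c (br Q R),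
    h_anti R (algebraMap ℝ (SwapRing I) c),
    br_algebraMap_left br h_smul h_leib c R]
  simp [br_zero_left br h_add]

end Bracket

/- ## The Jacobi identity on generators -/

lemma sw_smul_def {I : Type*} (c : ℝ) (x : SwapRing I) :
    c • x = algebraMap ℝ (SwapRing I) c * x := Algebra.smul_def c x

set_option maxHeartbeats 2000000 in
lemma jac_gen {I : Type*} (r : I → ℝ) (hr : Function.Injective r)
    (br : SwapRing I → SwapRing I → SwapRing I)
    (h_add : ∀ x y z : SwapRing I, br (x + y) z = br x z + br y z)
    (h_smul : ∀ (c : ℝ) (x y : SwapRing I), br (c • x) y = c • br x y)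
    (h_anti : ∀ x y : SwapRing I, br x y = - br y x)
    (h_leib : ∀ x y z : SwapRing I, br (x * y) z = x * br y z + y * br x z)
    (h_gen : ∀ a b c d : I,
      br (swapGen a b) (swapGen c d) =
        linkJ (r a) (r b) (r c) (r d) • (swapGen a d * swapGen c b))
    (a b c d e f : I) :
    Jacobiator br (swapGen a b) (swapGen c d) (swapGen e f) = 0 := by
  have L : ∀ a b c d e f : I,
      br (br (swapGen a b) (swapGen c d)) (swapGen e f) =
        algebraMap ℝ (SwapRing I)
            (linkJ (r a) (r b) (r c) (r d) * linkJ (r c) (r b) (r e) (r f)) *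
          (swapGen a d * swapGen c f * swapGen e b) +
        algebraMap ℝ (SwapRing I)
            (linkJ (r a) (r b) (r c) (r d) * linkJ (r a) (r d) (r e) (r f)) *
          (swapGen c b * swapGen a f * swapGen e d) := by
    intro a b c d e f
    rw [h_gen a b c d, h_smul, h_leib, h_gen c b e f, h_gen a d e f]
    rw [smul_add, mul_smul_comm, mul_smul_comm, smul_smul, smul_smul]
    rw [sw_smul_def, sw_smul_def]
    ring
  unfold Jacobiator
  rw [L a b c d e f, L c d e f a b, L e f a b c d]
  simp only [map_mul]
  -- rank setup
  let v : Fin 6 → ℝ := ![r a, r b, r c, r d, r e, r f]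
  have hJ1 : linkJ (r a) (r b) (r c) (r d)
      = (1 / 2) * ((zJ (rnk v 0) (rnk v 1) (rnk v 2) (rnk v 3) : ℤ) : ℝ) :=
    linkJ_rank v 0 1 2 3
  have hJ2 : linkJ (r c) (r b) (r e) (r f)
      = (1 / 2) * ((zJ (rnk v 2) (rnk v 1) (rnk v 4) (rnk v 5) : ℤ) : ℝ) :=
    linkJ_rank v 2 1 4 5
  have hJ3 : linkJ (r a) (r d) (r e) (r f)
      = (1 / 2) * ((zJ (rnk v 0) (rnk v 3) (rnk v 4) (rnk v 5) : ℤ) : ℝ) :=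
    linkJ_rank v 0 3 4 5
  have hJ4 : linkJ (r c) (r d) (r e) (r f)
      = (1 / 2) * ((zJ (rnk v 2) (rnk v 3) (rnk v 4) (rnk v 5) : ℤ) : ℝ) :=
    linkJ_rank v 2 3 4 5
  have hJ5 : linkJ (r e) (r d) (r a) (r b)
      = (1 / 2) * ((zJ (rnk v 4) (rnk v 3) (rnk v 0) (rnk v 1) : ℤ) : ℝ) :=
    linkJ_rank v 4 3 0 1
  have hJ6 : linkJ (r c) (r f) (r a) (r b)
      = (1 / 2) * ((zJ (rnk v 2) (rnk v 5) (rnk v 0) (rnk v 1) : ℤ) : ℝ) :=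
    linkJ_rank v 2 5 0 1
  have hJ7 : linkJ (r e) (r f) (r a) (r b)
      = (1 / 2) * ((zJ (rnk v 4) (rnk v 5) (rnk v 0) (rnk v 1) : ℤ) : ℝ) :=
    linkJ_rank v 4 5 0 1
  have hJ8 : linkJ (r a) (r f) (r c) (r d)
      = (1 / 2) * ((zJ (rnk v 0) (rnk v 5) (rnk v 2) (rnk v 3) : ℤ) : ℝ) :=
    linkJ_rank v 0 5 2 3
  have hJ9 : linkJ (r e) (r b) (r c) (r d)
      = (1 / 2) * ((zJ (rnk v 4) (rnk v 1) (rnk v 2) (rnk v 3) : ℤ) : ℝ) :=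
    linkJ_rank v 4 1 2 3
  have hC1cast : linkJ (r a) (r b) (r c) (r d) * linkJ (r c) (r b) (r e) (r f)
      + linkJ (r c) (r d) (r e) (r f) * linkJ (r e) (r d) (r a) (r b)
      + linkJ (r e) (r f) (r a) (r b) * linkJ (r a) (r f) (r c) (r d)
      = (1 / 4) * ((zC1 (rnk v 0) (rnk v 1) (rnk v 2) (rnk v 3) (rnk v 4) (rnk v 5) : ℤ) : ℝ) := by
    rw [hJ1, hJ2, hJ4, hJ5, hJ7, hJ8]
    simp only [zC1]
    push_cast
    ring
  have hC2cast : linkJ (r a) (r b) (r c) (r d) * linkJ (r a) (r d) (r e) (r f)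
      + linkJ (r c) (r d) (r e) (r f) * linkJ (r c) (r f) (r a) (r b)
      + linkJ (r e) (r f) (r a) (r b) * linkJ (r e) (r b) (r c) (r d)
      = (1 / 4) * ((zC2 (rnk v 0) (rnk v 1) (rnk v 2) (rnk v 3) (rnk v 4) (rnk v 5) : ℤ) : ℝ) := by
    rw [hJ1, hJ3, hJ4, hJ6, hJ7, hJ9]
    simp only [zC2]
    push_cast
    ring
  rcases discreteJac (rnk v 0) (rnk v 1) (rnk v 2) (rnk v 3) (rnk v 4) (rnk v 5) with
    ⟨h1, h2⟩ | ⟨hm1, hm2⟩ | ⟨hs, hcase⟩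
  · -- both coefficients vanish
    have hC1 : linkJ (r a) (r b) (r c) (r d) * linkJ (r c) (r b) (r e) (r f)
        + linkJ (r c) (r d) (r e) (r f) * linkJ (r e) (r d) (r a) (r b)
        + linkJ (r e) (r f) (r a) (r b) * linkJ (r a) (r f) (r c) (r d) = 0 := by
      rw [hC1cast, h1]; norm_num
    have hC2 : linkJ (r a) (r b) (r c) (r d) * linkJ (r a) (r d) (r e) (r f)
        + linkJ (r c) (r d) (r e) (r f) * linkJ (r c) (r f) (r a) (r b)
        + linkJ (r e) (r f) (r a) (r b) * linkJ (r e) (r b) (r c) (r d) = 0 := by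
      rw [hC2cast, h2]; norm_num
    have hC1' := congrArg (algebraMap ℝ (SwapRing I)) hC1
    have hC2' := congrArg (algebraMap ℝ (SwapRing I)) hC2
    simp only [map_add, map_mul, map_zero] at hC1' hC2'
    linear_combination (swapGen a d * swapGen c f * swapGen e b) * hC1'
      + (swapGen c b * swapGen a f * swapGen e d) * hC2'
  · -- both monomials vanish
    have hM1 : swapGen a d * swapGen c f * swapGen e b = 0 := by
      rcases hm1 with h | h | h
      · have : a = d := hr (val_eq_of_rnk_eq h)
        rw [this, swapGen_diag]; ring
      · have : c = f := hr (val_eq_of_rnk_eq h)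
        rw [this, swapGen_diag]; ring
      · have : e = b := hr (val_eq_of_rnk_eq h)
        rw [this, swapGen_diag]; ring
    have hM2 : swapGen c b * swapGen a f * swapGen e d = 0 := by
      rcases hm2 with h | h | h
      · have : c = b := hr (val_eq_of_rnk_eq h)
        rw [this, swapGen_diag]; ring
      · have : a = f := hr (val_eq_of_rnk_eq h)
        rw [this, swapGen_diag]; ring
      · have : e = d := hr (val_eq_of_rnk_eq h)
        rw [this, swapGen_diag]; ring
    linear_combination
      (algebraMap ℝ (SwapRing I) (linkJ (r a) (r b) (r c) (r d))
          * algebraMap ℝ (SwapRing I) (linkJ (r c) (r b) (r e) (r f))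
        + algebraMap ℝ (SwapRing I) (linkJ (r c) (r d) (r e) (r f))
          * algebraMap ℝ (SwapRing I) (linkJ (r e) (r d) (r a) (r b))
        + algebraMap ℝ (SwapRing I) (linkJ (r e) (r f) (r a) (r b))
          * algebraMap ℝ (SwapRing I) (linkJ (r a) (r f) (r c) (r d))) * hM1
      + (algebraMap ℝ (SwapRing I) (linkJ (r a) (r b) (r c) (r d))
          * algebraMap ℝ (SwapRing I) (linkJ (r a) (r d) (r e) (r f))
        + algebraMap ℝ (SwapRing I) (linkJ (r c) (r d) (r e) (r f))
          * algebraMap ℝ (SwapRing I) (linkJ (r c) (r f) (r a) (r b))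
        + algebraMap ℝ (SwapRing I) (linkJ (r e) (r f) (r a) (r b))
          * algebraMap ℝ (SwapRing I) (linkJ (r e) (r b) (r c) (r d))) * hM2
  · -- coefficients sum to zero and the two monomials coincide
    have hsum : (linkJ (r a) (r b) (r c) (r d) * linkJ (r c) (r b) (r e) (r f)
        + linkJ (r c) (r d) (r e) (r f) * linkJ (r e) (r d) (r a) (r b)
        + linkJ (r e) (r f) (r a) (r b) * linkJ (r a) (r f) (r c) (r d))
        + (linkJ (r a) (r b) (r c) (r d) * linkJ (r a) (r d) (r e) (r f)
        + linkJ (r c) (r d) (r e) (r f) * linkJ (r c) (r f) (r a) (r b)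
        + linkJ (r e) (r f) (r a) (r b) * linkJ (r e) (r b) (r c) (r d)) = 0 := by
      rw [hC1cast, hC2cast, ← mul_add, ← Int.cast_add, hs]
      norm_num
    have hsum' := congrArg (algebraMap ℝ (SwapRing I)) hsum
    simp only [map_add, map_mul, map_zero] at hsum'
    have hM : swapGen a d * swapGen c f * swapGen e b
        = swapGen c b * swapGen a f * swapGen e d := by
      rcases hcase with ⟨e1, e2⟩ | ⟨e1, e2⟩ | ⟨e1, e2⟩ | ⟨e1, e2⟩ | ⟨e1, e2⟩
      · have g1 : a = c := hr (val_eq_of_rnk_eq e1)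
        have g2 : b = d := hr (val_eq_of_rnk_eq e2)
        rw [g1, g2]; try ring
      · have g1 : c = e := hr (val_eq_of_rnk_eq e1)
        have g2 : d = f := hr (val_eq_of_rnk_eq e2)
        rw [g1, g2]; try ring
      · have g1 : e = a := hr (val_eq_of_rnk_eq e1)
        have g2 : f = b := hr (val_eq_of_rnk_eq e2)
        rw [g1, g2]; try ring
      · have g1 : a = c := hr (val_eq_of_rnk_eq e1)
        have g2 : c = e := hr (val_eq_of_rnk_eq e2)
        rw [g1, g2]; try ring
      · have g1 : b = d := hr (val_eq_of_rnk_eq e1)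
        have g2 : d = f := hr (val_eq_of_rnk_eq e2)
        rw [g1, g2]; try ring
    linear_combination
      (algebraMap ℝ (SwapRing I) (linkJ (r a) (r b) (r c) (r d))
          * algebraMap ℝ (SwapRing I) (linkJ (r c) (r b) (r e) (r f))
        + algebraMap ℝ (SwapRing I) (linkJ (r c) (r d) (r e) (r f))
          * algebraMap ℝ (SwapRing I) (linkJ (r e) (r d) (r a) (r b))
        + algebraMap ℝ (SwapRing I) (linkJ (r e) (r f) (r a) (r b))
          * algebraMap ℝ (SwapRing I) (linkJ (r a) (r f) (r c) (r d))) * hM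
      + (swapGen c b * swapGen a f * swapGen e d) * hsum'

/-- **(F. Labourie)** Any swapping bracket on the swapping ring of `(I, r)`,
with `r : I → ℝ` injective, satisfies the Jacobi identity. -/
theorem swapping_bracket_jacobi {I : Type*} (r : I → ℝ) (hr : Function.Injective r)
    (br : SwapRing I → SwapRing I → SwapRing I)
    -- `{·,·}` is ℝ-bilinear, antisymmetric, and a derivation in each argument
    (h_add : ∀ x y z : SwapRing I, br (x + y) z = br x z + br y z)
    (h_smul : ∀ (c : ℝ) (x y : SwapRing I), br (c • x) y = c • br x y)
    (h_anti : ∀ x y : SwapRing I, br x y = - br y x)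
    (h_leib : ∀ x y z : SwapRing I, br (x * y) z = x * br y z + y * br x z)
    -- values on the generators
    (h_gen : ∀ a b c d : I,
      br (swapGen a b) (swapGen c d) =
        linkJ (r a) (r b) (r c) (r d) • (swapGen a d * swapGen c b)) :
    ∀ P Q R : SwapRing I, br (br P Q) R + br (br Q R) P + br (br R P) Q = 0 := by
  have hmem : ∀ x : SwapRing I,
      x ∈ Algebra.adjoin ℝ (Set.range fun p : I × I => swapGen p.1 p.2) := by
    intro x
    rw [swapGen_adjoin_top]
    trivial
  have keyGen : ∀ a b c d e f : I,
      Jacobiator br (swapGen a b) (swapGen c d) (swapGen e f) = 0 :=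
    jac_gen r hr br h_add h_smul h_anti h_leib h_gen
  have step1 : ∀ (R : SwapRing I) (a b c d : I),
      Jacobiator br R (swapGen a b) (swapGen c d) = 0 := by
    intro R
    induction hmem R using Algebra.adjoin_induction with
    | mem x hx =>
      obtain ⟨⟨e', f'⟩, rfl⟩ := hx
      intro a b c d
      exact keyGen e' f' a b c d
    | algebraMap c' =>
      intro a b c d
      exact jac_algebraMap_left br h_add h_smul h_anti h_leib c' _ _
    | add x y hx hy ihx ihy =>
      intro a b c d
      rw [jac_add_left br h_add h_anti, ihx a b c d, ihy a b c d, add_zero]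
    | mul x y hx hy ihx ihy =>
      intro a b c d
      rw [jac_mul_left br h_add h_anti h_leib, ihx a b c d, ihy a b c d]
      simp
  have step2 : ∀ (Q : SwapRing I) (R : SwapRing I) (a b : I),
      Jacobiator br Q R (swapGen a b) = 0 := by
    intro Q
    induction hmem Q using Algebra.adjoin_induction with
    | mem x hx =>
      obtain ⟨⟨e', f'⟩, rfl⟩ := hx
      intro R a b
      rw [jac_cyclic]
      exact step1 R a b e' f'
    | algebraMap c' =>
      intro R a b
      exact jac_algebraMap_left br h_add h_smul h_anti h_leib c' _ _
    | add x y hx hy ihx ihy =>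
      intro R a b
      rw [jac_add_left br h_add h_anti, ihx R a b, ihy R a b, add_zero]
    | mul x y hx hy ihx ihy =>
      intro R a b
      rw [jac_mul_left br h_add h_anti h_leib, ihx R a b, ihy R a b]
      simp
  have step3 : ∀ P Q R : SwapRing I, Jacobiator br P Q R = 0 := by
    intro P
    induction hmem P using Algebra.adjoin_induction with
    | mem x hx =>
      obtain ⟨⟨e', f'⟩, rfl⟩ := hx
      intro Q R
      rw [jac_cyclic]
      exact step2 Q R e' f'
    | algebraMap c' =>
      intro Q R
      exact jac_algebraMap_left br h_add h_smul h_anti h_leib c' _ _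
    | add x y hx hy ihx ihy =>
      intro Q R
      rw [jac_add_left br h_add h_anti, ihx Q R, ihy Q R, add_zero]
    | mul x y hx hy ihx ihy =>
      intro Q R
      rw [jac_mul_left br h_add h_anti h_leib, ihx Q R, ihy Q R]
      simp
  exact step3
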